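/- (Gaussian elimination) Let 𝒞 be an additive category and suppose given objects C, b₁, D, b₂, E, F of 𝒞 and morphisms α : C → b₁, β : C → D, φ : b₁ → b₂, δ : D → b₂, γ : b₁ → E, ε : D → E, μ : b₂ → F, ν : E → F such that φ is an isomorphism and such that the maps d¹ = (α, β)ᵗ : C → b₁ ⊕ D, d² = [[φ, δ], [γ, ε]] : b₁ ⊕ D → b₂ ⊕ E, d³ = (μ, ν) : b₂ ⊕ E → F satisfy d² ∘ d¹ = 0 and d³ ∘ d² = 0, giving a four-term cochain complex K supported in degrees 0,1,2,3. Then K is isomorphic to the direct sum of the contractible complex 0 → b₁ →^φ b₂ → 0 (supported in degrees 1 and 2) and the complex K' : 0 → C →^β D →^{ε − γ∘φ⁻¹∘δ} E →^ν F → 0 supported in degrees 0,1,2,3; in particular, K and K' are homotopy equivalent. -/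

import Mathlib

open CategoryTheory CategoryTheory.Limits ZeroObject

attribute [local instance] CategoryTheory.Limits.hasBinaryBiproducts_of_finite_biproducts

variable {𝒞 : Type*} [Category 𝒞] [Preadditive 𝒞] [HasFiniteBiproducts 𝒞]

/-- The objects of a cochain complex supported in degrees `0,1,2,3`. -/
noncomputable def fourObj (X0 X1 X2 X3 : 𝒞) : ℕ → 𝒞
  | 0 => X0
  | 1 => X1
  | 2 => X2
  | 3 => X3
  | _ => 0

/-- The differentials of a cochain complex supported in degrees `0,1,2,3`. -/
noncomputable def fourD {X0 X1 X2 X3 : 𝒞} (d0 : X0 ⟶ X1) (d1 : X1 ⟶ X2) (d2 : X2 ⟶ X3) :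
    ∀ n, fourObj X0 X1 X2 X3 n ⟶ fourObj X0 X1 X2 X3 (n + 1)
  | 0 => d0
  | 1 => d1
  | 2 => d2
  | (_ + 3) => 0

/-- The cochain complex `X0 → X1 → X2 → X3` supported in degrees `0,1,2,3`. -/
noncomputable def fourComplex {X0 X1 X2 X3 : 𝒞} (d0 : X0 ⟶ X1) (d1 : X1 ⟶ X2) (d2 : X2 ⟶ X3)
    (h01 : d0 ≫ d1 = 0) (h12 : d1 ≫ d2 = 0) : CochainComplex 𝒞 ℕ :=
  CochainComplex.of (fourObj X0 X1 X2 X3) (fourD d0 d1 d2) (by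
    rintro (_ | _ | _ | n)
    · exact h01
    · exact h12
    · exact comp_zero
    · exact zero_comp)

section Hom

variable {X0 X1 X2 X3 Y0 Y1 Y2 Y3 : 𝒞}

/-- componentwise data for a map of four-term complexes -/
noncomputable def fourMap (f0 : X0 ⟶ Y0) (f1 : X1 ⟶ Y1) (f2 : X2 ⟶ Y2) (f3 : X3 ⟶ Y3) :
    ∀ n, fourObj X0 X1 X2 X3 n ⟶ fourObj Y0 Y1 Y2 Y3 n
  | 0 => f0
  | 1 => f1
  | 2 => f2
  | 3 => f3
  | (_ + 4) => 0

variable {d0 : X0 ⟶ X1} {d1 : X1 ⟶ X2} {d2 : X2 ⟶ X3}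
  {e0 : Y0 ⟶ Y1} {e1 : Y1 ⟶ Y2} {e2 : Y2 ⟶ Y3}
  {hd01 : d0 ≫ d1 = 0} {hd12 : d1 ≫ d2 = 0}
  {he01 : e0 ≫ e1 = 0} {he12 : e1 ≫ e2 = 0}

noncomputable def fourHom (f0 : X0 ⟶ Y0) (f1 : X1 ⟶ Y1) (f2 : X2 ⟶ Y2) (f3 : X3 ⟶ Y3)
    (c0 : f0 ≫ e0 = d0 ≫ f1) (c1 : f1 ≫ e1 = d1 ≫ f2) (c2 : f2 ≫ e2 = d2 ≫ f3) :
    fourComplex d0 d1 d2 hd01 hd12 ⟶ fourComplex e0 e1 e2 he01 he12 :=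
  CochainComplex.ofHom (fourMap f0 f1 f2 f3) (by
    rintro (_ | _ | _ | n) <;> dsimp only [fourComplex] <;>
      rw [CochainComplex.of_d, CochainComplex.of_d]
    · exact c0
    · exact c1
    · exact c2
    · rw [show fourD e0 e1 e2 (n+1+1+1) = 0 from rfl,
        show fourD d0 d1 d2 (n+1+1+1) = 0 from rfl, comp_zero, zero_comp])

@[simp] lemma fourHom_f_0 (f0 : X0 ⟶ Y0) (f1 : X1 ⟶ Y1) (f2 : X2 ⟶ Y2) (f3 : X3 ⟶ Y3)
    (c0 : f0 ≫ e0 = d0 ≫ f1) (c1 : f1 ≫ e1 = d1 ≫ f2) (c2 : f2 ≫ e2 = d2 ≫ f3) :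
    (fourHom (hd01 := hd01) (hd12 := hd12) (he01 := he01) (he12 := he12)
      f0 f1 f2 f3 c0 c1 c2).f 0 = f0 := rfl

@[simp] lemma fourHom_f_1 (f0 : X0 ⟶ Y0) (f1 : X1 ⟶ Y1) (f2 : X2 ⟶ Y2) (f3 : X3 ⟶ Y3)
    (c0 : f0 ≫ e0 = d0 ≫ f1) (c1 : f1 ≫ e1 = d1 ≫ f2) (c2 : f2 ≫ e2 = d2 ≫ f3) :
    (fourHom (hd01 := hd01) (hd12 := hd12) (he01 := he01) (he12 := he12)
      f0 f1 f2 f3 c0 c1 c2).f 1 = f1 := rfl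

@[simp] lemma fourHom_f_2 (f0 : X0 ⟶ Y0) (f1 : X1 ⟶ Y1) (f2 : X2 ⟶ Y2) (f3 : X3 ⟶ Y3)
    (c0 : f0 ≫ e0 = d0 ≫ f1) (c1 : f1 ≫ e1 = d1 ≫ f2) (c2 : f2 ≫ e2 = d2 ≫ f3) :
    (fourHom (hd01 := hd01) (hd12 := hd12) (he01 := he01) (he12 := he12)
      f0 f1 f2 f3 c0 c1 c2).f 2 = f2 := rfl

@[simp] lemma fourHom_f_3 (f0 : X0 ⟶ Y0) (f1 : X1 ⟶ Y1) (f2 : X2 ⟶ Y2) (f3 : X3 ⟶ Y3)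
    (c0 : f0 ≫ e0 = d0 ≫ f1) (c1 : f1 ≫ e1 = d1 ≫ f2) (c2 : f2 ≫ e2 = d2 ≫ f3) :
    (fourHom (hd01 := hd01) (hd12 := hd12) (he01 := he01) (he12 := he12)
      f0 f1 f2 f3 c0 c1 c2).f 3 = f3 := rfl

@[simp] lemma fourComplex_d01 : (fourComplex d0 d1 d2 hd01 hd12).d 0 1 = d0 :=
  by dsimp only [fourComplex]; exact CochainComplex.of_d _ _ 0

@[simp] lemma fourComplex_d12 : (fourComplex d0 d1 d2 hd01 hd12).d 1 2 = d1 :=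
  by dsimp only [fourComplex]; exact CochainComplex.of_d _ _ 1

@[simp] lemma fourComplex_d23 : (fourComplex d0 d1 d2 hd01 hd12).d 2 3 = d2 :=
  by dsimp only [fourComplex]; exact CochainComplex.of_d _ _ 2

@[simp] lemma fourComplex_d34 : (fourComplex d0 d1 d2 hd01 hd12).d 3 4 = 0 :=
  CochainComplex.of_d (d := fourD d0 d1 d2) _ 3

lemma isZero_fourComplex_X (n : ℕ) :
    IsZero ((fourComplex d0 d1 d2 hd01 hd12).X (n + 4)) := isZero_zero 𝒞

end Hom

section Main

variable (C b₁ D b₂ E F : 𝒞)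
    (α : C ⟶ b₁) (β : C ⟶ D) (φ : b₁ ⟶ b₂) (δ : D ⟶ b₂) (γ : b₁ ⟶ E) (ε : D ⟶ E)
    (μ : b₂ ⟶ F) (ν : E ⟶ F) [IsIso φ]

theorem mainAux
    (h21 : biprod.lift α β ≫ biprod.desc (biprod.lift φ γ) (biprod.lift δ ε) = 0)
    (h32 : biprod.desc (biprod.lift φ γ) (biprod.lift δ ε) ≫ biprod.desc μ ν = 0)
    (hK'01 : β ≫ (ε - δ ≫ inv φ ≫ γ) = 0)
    (hK'12 : (ε - δ ≫ inv φ ≫ γ) ≫ ν = 0) :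
    Nonempty ((fourComplex (biprod.lift α β)
        (biprod.desc (biprod.lift φ γ) (biprod.lift δ ε)) (biprod.desc μ ν) h21 h32) ≅
      (fourComplex (0 : (0 : 𝒞) ⟶ b₁) φ (0 : b₂ ⟶ (0 : 𝒞)) zero_comp comp_zero) ⊞
      (fourComplex β (ε - δ ≫ inv φ ≫ γ) ν hK'01 hK'12)) ∧
    Nonempty (HomotopyEquiv
      (fourComplex (biprod.lift α β)
        (biprod.desc (biprod.lift φ γ) (biprod.lift δ ε)) (biprod.desc μ ν) h21 h32)
      (fourComplex β (ε - δ ≫ inv φ ≫ γ) ν hK'01 hK'12)) := by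
  set K := fourComplex (biprod.lift α β)
      (biprod.desc (biprod.lift φ γ) (biprod.lift δ ε)) (biprod.desc μ ν) h21 h32 with hK
  set Kcontr := fourComplex (0 : (0 : 𝒞) ⟶ b₁) φ (0 : b₂ ⟶ (0 : 𝒞)) zero_comp comp_zero
    with hKcontr
  set K' := fourComplex β (ε - δ ≫ inv φ ≫ γ) ν hK'01 hK'12 with hK'
  -- basic identities
  have h1 : α ≫ φ + β ≫ δ = 0 := by simpa using h21 =≫ biprod.fst
  have h3 : φ ≫ μ + γ ≫ ν = 0 := by simpa using biprod.inl ≫= h32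
  have h4 : δ ≫ μ + ε ≫ ν = 0 := by simpa using biprod.inr ≫= h32
  have hkey : α + β ≫ (δ ≫ inv φ) = 0 := by
    have := h1 =≫ inv φ
    simpa [Category.assoc] using this
  have hα : α = -(β ≫ (δ ≫ inv φ)) := eq_neg_of_add_eq_zero_left hkey
  have hγν : γ ≫ ν = -(φ ≫ μ) := (neg_eq_of_add_eq_zero_right h3).symm
  have hεν : ε ≫ ν = -(δ ≫ μ) := (neg_eq_of_add_eq_zero_right h4).symm
  -- the four chain maps
  let pK : K ⟶ Kcontr := fourHom 0 (biprod.desc (𝟙 b₁) (δ ≫ inv φ)) biprod.fst 0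
    (by rw [zero_comp, biprod.lift_desc, Category.comp_id]; exact hkey.symm)
    (by apply biprod.hom_ext' <;> simp)
    (by simp)
  let iK : Kcontr ⟶ K := fourHom 0 biprod.inl (biprod.lift (𝟙 b₂) (inv φ ≫ γ)) 0
    (by simp)
    (by apply biprod.hom_ext <;> simp)
    (by rw [biprod.lift_desc]; simp [hγν])
  let qK : K ⟶ K' := fourHom (𝟙 C) biprod.snd (biprod.desc (-(inv φ ≫ γ)) (𝟙 E)) (𝟙 F)
    (by simp)
    (by apply biprod.hom_ext' <;> simp <;> abel)
    (by apply biprod.hom_ext' <;> simp [hγν])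
  let jK : K' ⟶ K := fourHom (𝟙 C) (biprod.lift (-(δ ≫ inv φ)) (𝟙 D)) biprod.inr (𝟙 F)
    (by apply biprod.hom_ext <;> simp [hα])
    (by apply biprod.hom_ext <;> simp [biprod.lift_desc] <;> abel)
    (by simp)
  -- composite identities
  have hip : iK ≫ pK = 𝟙 Kcontr := by
    apply HomologicalComplex.hom_ext
    rintro (_|_|_|_|n)
    · exact (isZero_zero 𝒞).eq_of_src _ _
    · show biprod.inl ≫ biprod.desc (𝟙 b₁) (δ ≫ inv φ) = 𝟙 b₁
      simp
    · show biprod.lift (𝟙 b₂) (inv φ ≫ γ) ≫ (biprod.fst : b₂ ⊞ E ⟶ b₂) = 𝟙 b₂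
      simp
    · exact (isZero_zero 𝒞).eq_of_src _ _
    · exact (isZero_zero 𝒞).eq_of_src _ _
  have hiq : iK ≫ qK = 0 := by
    apply HomologicalComplex.hom_ext
    rintro (_|_|_|_|n)
    · exact (isZero_zero 𝒞).eq_of_src _ _
    · show biprod.inl ≫ (biprod.snd : b₁ ⊞ D ⟶ D) = 0
      simp
    · show biprod.lift (𝟙 b₂) (inv φ ≫ γ) ≫ biprod.desc (-(inv φ ≫ γ)) (𝟙 E) = 0
      rw [biprod.lift_desc]; simp
    · exact (isZero_zero 𝒞).eq_of_src _ _
    · exact (isZero_zero 𝒞).eq_of_src _ _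
  have hjp : jK ≫ pK = 0 := by
    apply HomologicalComplex.hom_ext
    rintro (_|_|_|_|n)
    · exact (isZero_zero 𝒞).eq_of_tgt _ _
    · show biprod.lift (-(δ ≫ inv φ)) (𝟙 D) ≫ biprod.desc (𝟙 b₁) (δ ≫ inv φ) = 0
      rw [biprod.lift_desc]; simp
    · show (biprod.inr : E ⟶ b₂ ⊞ E) ≫ biprod.fst = 0
      simp
    · exact (isZero_zero 𝒞).eq_of_tgt _ _
    · exact (isZero_zero 𝒞).eq_of_src _ _
  have hjq : jK ≫ qK = 𝟙 K' := by
    apply HomologicalComplex.hom_ext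
    rintro (_|_|_|_|n)
    · show 𝟙 C ≫ 𝟙 C = 𝟙 C
      simp
    · show biprod.lift (-(δ ≫ inv φ)) (𝟙 D) ≫ biprod.snd = 𝟙 D
      simp
    · show (biprod.inr : E ⟶ b₂ ⊞ E) ≫ biprod.desc (-(inv φ ≫ γ)) (𝟙 E) = 𝟙 E
      simp
    · show 𝟙 F ≫ 𝟙 F = 𝟙 F
      simp
    · exact (isZero_zero 𝒞).eq_of_src _ _
  have hsum : pK ≫ iK + qK ≫ jK = 𝟙 K := by
    apply HomologicalComplex.hom_ext
    rintro (_|_|_|_|n)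
    · show (0 : C ⟶ (0 : 𝒞)) ≫ (0 : (0 : 𝒞) ⟶ C) + 𝟙 C ≫ 𝟙 C = 𝟙 C
      simp
    · show (biprod.desc (𝟙 b₁) (δ ≫ inv φ) ≫ biprod.inl +
          biprod.snd ≫ biprod.lift (-(δ ≫ inv φ)) (𝟙 D) : b₁ ⊞ D ⟶ b₁ ⊞ D) = 𝟙 (b₁ ⊞ D)
      apply biprod.hom_ext' <;> apply biprod.hom_ext <;> simp <;> erw [Preadditive.add_comp, Preadditive.comp_add] <;> simp
    · show (biprod.fst ≫ biprod.lift (𝟙 b₂) (inv φ ≫ γ) +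
          biprod.desc (-(inv φ ≫ γ)) (𝟙 E) ≫ biprod.inr : b₂ ⊞ E ⟶ b₂ ⊞ E) = 𝟙 (b₂ ⊞ E)
      apply biprod.hom_ext' <;> apply biprod.hom_ext <;> simp <;> erw [Preadditive.add_comp, Preadditive.comp_add] <;> simp
    · show (0 : F ⟶ (0 : 𝒞)) ≫ (0 : (0 : 𝒞) ⟶ F) + 𝟙 F ≫ 𝟙 F = 𝟙 F
      simp
    · exact (isZero_zero 𝒞).eq_of_src _ _
  constructor
  · exact ⟨{
      hom := biprod.lift pK qK
      inv := biprod.desc iK jK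
      hom_inv_id := by rw [biprod.lift_desc]; exact hsum
      inv_hom_id := by
        apply biprod.hom_ext' <;> apply biprod.hom_ext <;>
          simp [hip, hiq, hjp, hjq] <;> try rfl }⟩
  · -- homotopy equivalence
    have e12 : Kcontr.d 1 2 = φ := fourComplex_d12
    have hcontr : Homotopy (𝟙 Kcontr) 0 := by
      refine Homotopy.mkCoinductive _ 0 ((isZero_zero 𝒞).eq_of_src _ _)
        (inv φ : b₂ ⟶ b₁) ?_ ?_
      · rw [e12, zero_comp, zero_add]
        simp only [HomologicalComplex.id_f]
        exact (IsIso.hom_inv_id φ).symm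
        try rfl
      · rintro (_|_|n) ⟨f, f', hp⟩
        · have hp' : 𝟙 (Kcontr.X 1) = f ≫ Kcontr.d 0 1 + Kcontr.d 1 2 ≫ f' := hp
          have hf : f = 0 := (isZero_zero 𝒞).eq_of_tgt _ _
          rw [hf, zero_comp, zero_add, e12] at hp'
          have hf' : f' = (inv φ : b₂ ⟶ b₁) := (IsIso.inv_eq_of_hom_inv_id (f := φ) hp'.symm).symm
          refine ⟨0, ?_⟩
          show 𝟙 (Kcontr.X 2) = f' ≫ Kcontr.d 1 2 + Kcontr.d 2 3 ≫ (0 : Kcontr.X 3 ⟶ Kcontr.X 2)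
          rw [hf', e12, comp_zero, add_zero]
          exact (IsIso.inv_hom_id φ).symm
          try rfl
        · exact ⟨0, (isZero_zero 𝒞).eq_of_src _ _⟩
        · exact ⟨0, (isZero_zero 𝒞).eq_of_src _ _⟩
    have hpi : Homotopy (pK ≫ iK) 0 := by
      refine (Homotopy.ofEq ?_).trans
        (((hcontr.compRight iK).compLeft pK).trans (Homotopy.ofEq ?_)) <;> simp
    have h2 : Homotopy ((0 : K ⟶ K) - pK ≫ iK) 0 := Homotopy.equivSubZero hpi.symm
    have h3 : Homotopy ((qK ≫ jK) - 𝟙 K) 0 :=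
      (Homotopy.ofEq (by rw [← hsum]; abel)).trans h2
    exact ⟨{
      hom := qK
      inv := jK
      homotopyInvHomId := Homotopy.ofEq hjq
      homotopyHomInvId := Homotopy.equivSubZero.symm h3 }⟩


end Main

/-- (Gaussian elimination) Given a four-term cochain complex
`C → b₁ ⊞ D → b₂ ⊞ E → F` (supported in degrees 0,1,2,3) whose middle
differential has matrix `[[φ, δ], [γ, ε]]` with `φ : b₁ ⟶ b₂` an
isomorphism, the complex is isomorphic to the direct sum of the contractible
complex `0 → b₁ → b₂ → 0` (supported in degrees 1, 2) and the complex
`C → D → E → F` with middle differential `ε − γ ∘ φ⁻¹ ∘ δ`; in particular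
the two four-term complexes are homotopy equivalent. -/
theorem gaussian_elimination
    (C b₁ D b₂ E F : 𝒞)
    (α : C ⟶ b₁) (β : C ⟶ D) (φ : b₁ ⟶ b₂) (δ : D ⟶ b₂) (γ : b₁ ⟶ E) (ε : D ⟶ E)
    (μ : b₂ ⟶ F) (ν : E ⟶ F) [IsIso φ]
    (h21 : biprod.lift α β ≫ biprod.desc (biprod.lift φ γ) (biprod.lift δ ε) = 0)
    (h32 : biprod.desc (biprod.lift φ γ) (biprod.lift δ ε) ≫ biprod.desc μ ν = 0) :
    let K : CochainComplex 𝒞 ℕ :=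
      fourComplex (biprod.lift α β) (biprod.desc (biprod.lift φ γ) (biprod.lift δ ε))
        (biprod.desc μ ν) h21 h32
    let Kcontr : CochainComplex 𝒞 ℕ :=
      fourComplex (0 : (0 : 𝒞) ⟶ b₁) φ (0 : b₂ ⟶ (0 : 𝒞)) zero_comp comp_zero
    let K' : CochainComplex 𝒞 ℕ :=
      fourComplex β (ε - δ ≫ inv φ ≫ γ) ν
        (by
          have h1 : α ≫ φ + β ≫ δ = 0 := by simpa using h21 =≫ biprod.fst
          have h2 : α ≫ γ + β ≫ ε = 0 := by simpa using h21 =≫ biprod.snd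
          have hβδ : β ≫ δ = -(α ≫ φ) := (neg_eq_of_add_eq_zero_right h1).symm
          have hβε : β ≫ ε = -(α ≫ γ) := (neg_eq_of_add_eq_zero_right h2).symm
          calc β ≫ (ε - δ ≫ inv φ ≫ γ)
              = β ≫ ε - (β ≫ δ) ≫ inv φ ≫ γ := by
                rw [Preadditive.comp_sub, ← Category.assoc]
            _ = -(α ≫ γ) - (-(α ≫ φ)) ≫ inv φ ≫ γ := by rw [hβδ, hβε]
            _ = 0 := by simp)
        (by
          have h3 : φ ≫ μ + γ ≫ ν = 0 := by simpa using biprod.inl ≫= h32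
          have h4 : δ ≫ μ + ε ≫ ν = 0 := by simpa using biprod.inr ≫= h32
          have hγν : γ ≫ ν = -(φ ≫ μ) := (neg_eq_of_add_eq_zero_right h3).symm
          have hεν : ε ≫ ν = -(δ ≫ μ) := (neg_eq_of_add_eq_zero_right h4).symm
          calc (ε - δ ≫ inv φ ≫ γ) ≫ ν
              = ε ≫ ν - δ ≫ inv φ ≫ γ ≫ ν := by
                simp only [Preadditive.sub_comp, Category.assoc]
            _ = -(δ ≫ μ) - δ ≫ inv φ ≫ (-(φ ≫ μ)) := by rw [hγν, hεν]
            _ = 0 := by simp)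
    Nonempty (K ≅ Kcontr ⊞ K') ∧ Nonempty (HomotopyEquiv K K') := by
  intro K Kcontr K'
  exact mainAux C b₁ D b₂ E F α β φ δ γ ε μ ν h21 h32 _ _
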